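/- Let R̂(X) be the rational function R̂_{n,m}(X) = (-1)^{n-m}·({m}_X!·{2N-2m-2}_X!!·{2N-m-1}_X^+!)/({n}_X!·{2N-2n-2}_X!!·{2N-n-1}_X^+!) ∈ ℚ(X), where {k}_X = (-X)^k - (-X)^{-k} and {k}_X^+ = (-X)^k + (-X)^{-k}, for fixed 0 ≤ m < n ≤ N-1. Then for p odd with p ≥ 2N+1, A a primitive 2p-th root of unity, and c = (p-1)/2 - N, the quantity ({m}!·{2c+2n+1}!!·{2c+n+1}^+!)/({n}!·{2c+2m+1}!!·{2c+m+1}^+!) (defined via (-A)) equals R̂(A). In particular this quantity, as a function of A, is the evaluation of a single rational function independent of p. -/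

import Mathlib

open Finset

/-! Quantum integers evaluated at a root of unity `A` (via `-A`). -/

/-- `{k} = (-A)^k - (-A)^{-k}` -/
noncomputable def qbr (A : ℂ) (k : ℕ) : ℂ := (-A) ^ (k : ℤ) - (-A) ^ (-(k : ℤ))

/-- `{k}^+ = (-A)^k + (-A)^{-k}` -/
noncomputable def qbrP (A : ℂ) (k : ℕ) : ℂ := (-A) ^ (k : ℤ) + (-A) ^ (-(k : ℤ))

/-- `{k}! = {1}{2}⋯{k}` -/
noncomputable def qfact (A : ℂ) (k : ℕ) : ℂ := ∏ j ∈ Finset.range k, qbr A (j + 1)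

/-- `{k}^+! = {1}^+{2}^+⋯{k}^+` -/
noncomputable def qfactP (A : ℂ) (k : ℕ) : ℂ := ∏ j ∈ Finset.range k, qbrP A (j + 1)

/-- `{k}!! = {k}{k-2}{k-4}⋯` -/
noncomputable def qdfact (A : ℂ) (k : ℕ) : ℂ :=
  ∏ i ∈ Finset.range ((k + 1) / 2), qbr A (k - 2 * i)

/-! The same quantities as rational functions in an indeterminate `X`. -/

/-- `{k}_X = (-X)^k - (-X)^{-k} ∈ ℚ(X)` -/
noncomputable def qbrX (k : ℕ) : RatFunc ℚ :=
  (-(RatFunc.X)) ^ (k : ℤ) - (-(RatFunc.X)) ^ (-(k : ℤ))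

/-- `{k}_X^+ = (-X)^k + (-X)^{-k} ∈ ℚ(X)` -/
noncomputable def qbrXP (k : ℕ) : RatFunc ℚ :=
  (-(RatFunc.X)) ^ (k : ℤ) + (-(RatFunc.X)) ^ (-(k : ℤ))

/-- `{k}_X!` -/
noncomputable def qfactX (k : ℕ) : RatFunc ℚ := ∏ j ∈ Finset.range k, qbrX (j + 1)

/-- `{k}_X^+!` -/
noncomputable def qfactXP (k : ℕ) : RatFunc ℚ := ∏ j ∈ Finset.range k, qbrXP (j + 1)

/-- `{k}_X!!` -/
noncomputable def qdfactX (k : ℕ) : RatFunc ℚ :=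
  ∏ i ∈ Finset.range ((k + 1) / 2), qbrX (k - 2 * i)

/-- `R̂_{n,m}(X) = (-1)^{n-m}·({m}_X!·{2N-2m-2}_X!!·{2N-m-1}_X^+!)/({n}_X!·{2N-2n-2}_X!!·{2N-n-1}_X^+!)`. -/
noncomputable def Rhat (N n m : ℕ) : RatFunc ℚ :=
  (-1 : RatFunc ℚ) ^ (n - m) *
      (qfactX m * qdfactX (2 * N - 2 * m - 2) * qfactXP (2 * N - m - 1)) /
    (qfactX n * qdfactX (2 * N - 2 * n - 2) * qfactXP (2 * N - n - 1))

section helpers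
variable {F : Type*} [Field F]

lemma brsub (x : F) (hx : x ≠ 0) (k : ℕ) :
    (-x) ^ (k : ℤ) - (-x) ^ (-(k : ℤ)) = (x ^ (2 * k) - 1) / (-x) ^ k := by
  have h : (-x) ≠ 0 := neg_ne_zero.2 hx
  have hk : ((-x) ^ k) ≠ 0 := pow_ne_zero _ h
  have h2 : ((-x) ^ k) ^ 2 = x ^ (2 * k) := by
    rw [← pow_mul, Even.neg_pow ⟨k, by ring⟩, mul_comm]
  rw [zpow_natCast, zpow_neg, zpow_natCast, ← h2]
  field_simp

lemma bradd (x : F) (hx : x ≠ 0) (k : ℕ) :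
    (-x) ^ (k : ℤ) + (-x) ^ (-(k : ℤ)) = (x ^ (2 * k) + 1) / (-x) ^ k := by
  have h : (-x) ≠ 0 := neg_ne_zero.2 hx
  have hk : ((-x) ^ k) ≠ 0 := pow_ne_zero _ h
  have h2 : ((-x) ^ k) ^ 2 = x ^ (2 * k) := by
    rw [← pow_mul, Even.neg_pow ⟨k, by ring⟩, mul_comm]
  rw [zpow_natCast, zpow_neg, zpow_natCast, ← h2]
  field_simp

noncomputable def sN {R : Type*} [CommRing R] (x : R) (a b c : ℕ) : R :=
  (∏ j ∈ Finset.range a, (x ^ (2 * (j + 1)) - 1)) *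
    (∏ i ∈ Finset.range ((b + 1) / 2), (x ^ (2 * (b - 2 * i)) - 1)) *
    (∏ j ∈ Finset.range c, (x ^ (2 * (j + 1)) + 1))

noncomputable def sD {R : Type*} [CommRing R] (x : R) (a b c : ℕ) : R :=
  (∏ j ∈ Finset.range a, (-x) ^ (j + 1)) *
    (∏ i ∈ Finset.range ((b + 1) / 2), (-x) ^ (b - 2 * i)) *
    (∏ j ∈ Finset.range c, (-x) ^ (j + 1))

lemma map_sN {R S : Type*} [CommRing R] [CommRing S] (f : R →+* S) (x : R) (a b c : ℕ) :
    f (sN x a b c) = sN (f x) a b c := by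
  simp only [sN, map_mul, map_prod, map_sub, map_add, map_pow, map_one]

lemma map_sD {R S : Type*} [CommRing R] [CommRing S] (f : R →+* S) (x : R) (a b c : ℕ) :
    f (sD x a b c) = sD (f x) a b c := by
  simp only [sD, map_mul, map_prod, map_pow, map_neg]

lemma eval_polydiv (f : ℚ →+* ℂ) (a : ℂ) (P Q : Polynomial ℚ) (hQ : Q.eval₂ f a ≠ 0) :
    RatFunc.eval f a (algebraMap (Polynomial ℚ) (RatFunc ℚ) P / algebraMap _ _ Q)
      = P.eval₂ f a / Q.eval₂ f a := by
  have hQ0 : Q ≠ 0 := fun h => hQ (by simp [h])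
  have hQm : algebraMap (Polynomial ℚ) (RatFunc ℚ) Q ≠ 0 := by
    simpa using hQ0
  have hd : Polynomial.eval₂ f a
      (RatFunc.denom (algebraMap (Polynomial ℚ) (RatFunc ℚ) P / algebraMap _ _ Q)) ≠ 0 := by
    obtain ⟨t, ht⟩ := RatFunc.denom_div_dvd P Q
    intro h0
    apply hQ
    rw [ht, Polynomial.eval₂_mul, h0, zero_mul]
  have key := RatFunc.eval_mul (f := f) (a := a)
    (x := algebraMap (Polynomial ℚ) (RatFunc ℚ) P / algebraMap _ _ Q)
    (y := algebraMap _ _ Q) hd (by simp [RatFunc.denom_algebraMap])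
  rw [div_mul_cancel₀ _ hQm, RatFunc.eval_algebraMap, RatFunc.eval_algebraMap] at key
  simp only [Algebra.algebraMap_self, RingHom.id_apply] at key
  rw [eq_div_iff hQ]
  exact key.symm


lemma side_C (A : ℂ) (hA : A ≠ 0) (a b c : ℕ) :
    qfact A a * qdfact A b * qfactP A c = sN A a b c / sD A a b c := by
  have h1 : qfact A a
      = (∏ j ∈ range a, (A ^ (2 * (j + 1)) - 1)) / ∏ j ∈ range a, (-A) ^ (j + 1) := by
    rw [← prod_div_distrib]
    unfold qfact qbr
    exact prod_congr rfl fun j _ => brsub A hA (j + 1)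
  have h2 : qdfact A b
      = (∏ i ∈ range ((b + 1) / 2), (A ^ (2 * (b - 2 * i)) - 1))
        / ∏ i ∈ range ((b + 1) / 2), (-A) ^ (b - 2 * i) := by
    rw [← prod_div_distrib]
    unfold qdfact qbr
    exact prod_congr rfl fun i _ => brsub A hA _
  have h3 : qfactP A c
      = (∏ j ∈ range c, (A ^ (2 * (j + 1)) + 1)) / ∏ j ∈ range c, (-A) ^ (j + 1) := by
    rw [← prod_div_distrib]
    unfold qfactP qbrP
    exact prod_congr rfl fun j _ => bradd A hA (j + 1)
  rw [h1, h2, h3, div_mul_div_comm, div_mul_div_comm]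
  rfl

lemma side_X (a b c : ℕ) :
    qfactX a * qdfactX b * qfactXP c = sN RatFunc.X a b c / sD RatFunc.X a b c := by
  have hA : (RatFunc.X : RatFunc ℚ) ≠ 0 := RatFunc.X_ne_zero
  have h1 : qfactX a
      = (∏ j ∈ range a, ((RatFunc.X : RatFunc ℚ) ^ (2 * (j + 1)) - 1))
        / ∏ j ∈ range a, (-(RatFunc.X : RatFunc ℚ)) ^ (j + 1) := by
    rw [← prod_div_distrib]
    unfold qfactX qbrX
    exact prod_congr rfl fun j _ => brsub RatFunc.X hA (j + 1)
  have h2 : qdfactX b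
      = (∏ i ∈ range ((b + 1) / 2), ((RatFunc.X : RatFunc ℚ) ^ (2 * (b - 2 * i)) - 1))
        / ∏ i ∈ range ((b + 1) / 2), (-(RatFunc.X : RatFunc ℚ)) ^ (b - 2 * i) := by
    rw [← prod_div_distrib]
    unfold qdfactX qbrX
    exact prod_congr rfl fun i _ => brsub RatFunc.X hA _
  have h3 : qfactXP c
      = (∏ j ∈ range c, ((RatFunc.X : RatFunc ℚ) ^ (2 * (j + 1)) + 1))
        / ∏ j ∈ range c, (-(RatFunc.X : RatFunc ℚ)) ^ (j + 1) := by
    rw [← prod_div_distrib]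
    unfold qfactXP qbrXP
    exact prod_congr rfl fun j _ => bradd RatFunc.X hA (j + 1)
  rw [h1, h2, h3, div_mul_div_comm, div_mul_div_comm]
  rfl

end helpers

/-- for `p` odd with `p ≥ 2N+1`, `A` a primitive `2p`-th root of unity
and `c = (p-1)/2 - N` (i.e. `2c + 2N + 1 = p`), the quantity
`({m}!·{2c+2n+1}!!·{2c+n+1}^+!)/({n}!·{2c+2m+1}!!·{2c+m+1}^+!)` equals the
evaluation at `A` of the single rational function `R̂_{n,m}(X)`, independent of `p`. -/
theorem stmt18 (N m n : ℕ) (hN : 2 ≤ N) (hmn : m < n) (hn : n ≤ N - 1)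
    (p : ℕ) (hp : Odd p) (hp' : 2 * N + 1 ≤ p) (c : ℕ) (hc : 2 * c + 2 * N + 1 = p)
    (A : ℂ) (hA : IsPrimitiveRoot A (2 * p)) :
    (qfact A m * qdfact A (2 * c + 2 * n + 1) * qfactP A (2 * c + n + 1)) /
        (qfact A n * qdfact A (2 * c + 2 * m + 1) * qfactP A (2 * c + m + 1)) =
      RatFunc.eval (algebraMap ℚ ℂ) A (Rhat N n m) := by
  have hp0 : 0 < p := by omega
  have hApow : A ^ (2 * p) = 1 := hA.pow_eq_one
  have hA0 : A ≠ 0 := by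
    intro h
    rw [h, zero_pow (by omega : 2 * p ≠ 0)] at hApow
    exact zero_ne_one hApow
  have hcop : Nat.Coprime p 2 :=
    Nat.coprime_comm.mp ((Nat.prime_two.coprime_iff_not_dvd).mpr
      (by rw [Nat.odd_iff] at hp; omega))
  have hAp : A ^ p = -1 := by
    have h2 : A ^ p * A ^ p = 1 := by
      rw [← pow_add, show p + p = 2 * p by ring]; exact hApow
    rcases mul_self_eq_one_iff.mp h2 with h | h
    · exfalso
      have hd := hA.dvd_of_pow_eq_one p h
      have := Nat.le_of_dvd hp0 hd
      omega
    · exact h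
  have hBp : (-A) ^ p = 1 := by
    rw [neg_pow, hAp, Odd.neg_one_pow hp]
    norm_num
  have hB : IsPrimitiveRoot (-A) p := by
    constructor
    · exact hBp
    · intro l hl
      rw [neg_pow] at hl
      rcases Nat.even_or_odd l with he | ho
      · rw [he.neg_one_pow, one_mul] at hl
        have hd := hA.dvd_of_pow_eq_one l hl
        exact dvd_trans ⟨2, by ring⟩ hd
      · rw [ho.neg_one_pow] at hl
        have hAl : A ^ l = -1 := by linear_combination -hl
        have h2l : A ^ (2 * l) = 1 := by
          rw [two_mul, pow_add, hAl]; ring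
        have hd := hA.dvd_of_pow_eq_one _ h2l
        obtain ⟨t, ht⟩ := hd
        rw [show 2 * p * t = 2 * (p * t) by ring] at ht
        exact ⟨t, by omega⟩
  have key1 : ∀ k : ℕ, 0 < k → k < p → A ^ (2 * k) ≠ 1 := by
    intro k hk1 hk2 h
    have h' : (-A) ^ (2 * k) = 1 := by
      rw [Even.neg_pow (even_two_mul k)]; exact h
    have hd := hB.dvd_of_pow_eq_one _ h'
    have hpk : p ∣ k := hcop.dvd_of_dvd_mul_left hd
    have := Nat.le_of_dvd hk1 hpk
    omega
  have key2 : ∀ k : ℕ, A ^ (2 * k) + 1 ≠ 0 := by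
    intro k h
    have hAk : A ^ (2 * k) = -1 := by linear_combination h
    have h4 : A ^ (2 * (2 * k)) = 1 := by
      rw [two_mul, pow_add, hAk]; ring
    have h4' : (-A) ^ (2 * (2 * k)) = 1 := by
      rw [Even.neg_pow (even_two_mul _)]; exact h4
    have hd := hB.dvd_of_pow_eq_one _ h4'
    have hp2k : p ∣ 2 * k := hcop.dvd_of_dvd_mul_left hd
    have hpk : p ∣ k := hcop.dvd_of_dvd_mul_left hp2k
    obtain ⟨t, rfl⟩ := hpk
    rw [show 2 * (p * t) = 2 * p * t by ring, pow_mul, hApow, one_pow] at hAk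
    norm_num at hAk
  have hBne : (-A) ≠ 0 := neg_ne_zero.2 hA0
  have qbr_ne : ∀ k : ℕ, 0 < k → k < p → qbr A k ≠ 0 := by
    intro k h1 h2
    unfold qbr
    rw [brsub A hA0 k]
    exact div_ne_zero (sub_ne_zero.2 (key1 k h1 h2)) (pow_ne_zero _ hBne)
  have qbrP_ne : ∀ k : ℕ, qbrP A k ≠ 0 := by
    intro k
    unfold qbrP
    rw [bradd A hA0 k]
    exact div_ne_zero (key2 k) (pow_ne_zero _ hBne)
  have hBzp : (-A) ^ (p : ℤ) = 1 := by rw [zpow_natCast]; exact hBp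
  have qbr_psub : ∀ k : ℕ, k ≤ p → qbr A (p - k) = -qbr A k := by
    intro k hk
    unfold qbr
    have h1 : ((p - k : ℕ) : ℤ) = (p : ℤ) - k := by omega
    rw [h1, neg_sub, zpow_sub₀ hBne, zpow_sub₀ hBne, hBzp]
    simp only [zpow_neg, zpow_natCast]
    field_simp
    ring
  have qbrP_psub : ∀ k : ℕ, k ≤ p → qbrP A (p - k) = qbrP A k := by
    intro k hk
    unfold qbrP
    have h1 : ((p - k : ℕ) : ℤ) = (p : ℤ) - k := by omega
    rw [h1, neg_sub, zpow_sub₀ hBne, zpow_sub₀ hBne, hBzp]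
    simp only [zpow_neg, zpow_natCast]
    field_simp
    ring
  have qdfact_odd : ∀ k : ℕ, qdfact A (2 * k + 1) = ∏ j ∈ range (k + 1), qbr A (2 * j + 1) := by
    intro k
    unfold qdfact
    rw [show (2 * k + 1 + 1) / 2 = k + 1 by omega]
    calc ∏ i ∈ range (k + 1), qbr A (2 * k + 1 - 2 * i)
        = ∏ i ∈ range (k + 1), qbr A (2 * (k + 1 - 1 - i) + 1) := by
          refine prod_congr rfl fun i hi => ?_
          rw [mem_range] at hi
          congr 1
          omega
      _ = ∏ j ∈ range (k + 1), qbr A (2 * j + 1) :=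
          prod_range_reflect (fun j => qbr A (2 * j + 1)) (k + 1)
  have qdfact_even : ∀ k : ℕ, qdfact A (2 * k) = ∏ j ∈ range k, qbr A (2 * j + 2) := by
    intro k
    unfold qdfact
    rw [show (2 * k + 1) / 2 = k by omega]
    calc ∏ i ∈ range k, qbr A (2 * k - 2 * i)
        = ∏ i ∈ range k, qbr A (2 * (k - 1 - i) + 2) := by
          refine prod_congr rfl fun i hi => ?_
          rw [mem_range] at hi
          congr 1
          omega
      _ = ∏ j ∈ range k, qbr A (2 * j + 2) :=
          prod_range_reflect (fun j => qbr A (2 * j + 2)) k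
  -- expansions
  have hUV : qfact A n = qfact A m * ∏ j ∈ Ico m n, qbr A (j + 1) := by
    unfold qfact
    exact (prod_range_mul_prod_Ico _ hmn.le).symm
  have hOdd1 : qdfact A (2 * c + 2 * n + 1)
      = qdfact A (2 * c + 2 * m + 1) * ∏ j ∈ Ico (c + m + 1) (c + n + 1), qbr A (2 * j + 1) := by
    rw [show 2 * c + 2 * n + 1 = 2 * (c + n) + 1 by ring,
      show 2 * c + 2 * m + 1 = 2 * (c + m) + 1 by ring, qdfact_odd, qdfact_odd]
    exact (prod_range_mul_prod_Ico _ (by omega)).symm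
  have hP1 : qfactP A (2 * c + n + 1)
      = qfactP A (2 * c + m + 1) * ∏ j ∈ Ico (2 * c + m + 1) (2 * c + n + 1), qbrP A (j + 1) := by
    unfold qfactP
    exact (prod_range_mul_prod_Ico _ (by omega)).symm
  have hEven1 : qdfact A (2 * N - 2 * m - 2)
      = qdfact A (2 * N - 2 * n - 2) * ∏ j ∈ Ico (N - n - 1) (N - m - 1), qbr A (2 * j + 2) := by
    rw [show 2 * N - 2 * m - 2 = 2 * (N - m - 1) by omega,
      show 2 * N - 2 * n - 2 = 2 * (N - n - 1) by omega, qdfact_even, qdfact_even]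
    exact (prod_range_mul_prod_Ico _ (by omega)).symm
  have hP2 : qfactP A (2 * N - m - 1)
      = qfactP A (2 * N - n - 1) * ∏ j ∈ Ico (2 * N - n - 1) (2 * N - m - 1), qbrP A (j + 1) := by
    unfold qfactP
    exact (prod_range_mul_prod_Ico _ (by omega)).symm
  -- the two reindexing identities
  have hV : (∏ j ∈ Ico (c + m + 1) (c + n + 1), qbr A (2 * j + 1))
      = (-1 : ℂ) ^ (n - m) * ∏ j ∈ Ico (N - n - 1) (N - m - 1), qbr A (2 * j + 2) := by
    simp only [prod_Ico_eq_prod_range]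
    rw [show c + n + 1 - (c + m + 1) = n - m by omega,
      show N - m - 1 - (N - n - 1) = n - m by omega]
    calc ∏ t ∈ range (n - m), qbr A (2 * (c + m + 1 + t) + 1)
        = ∏ t ∈ range (n - m), -qbr A (2 * (N - n - 1 + (n - m - 1 - t)) + 2) := by
          refine prod_congr rfl fun t ht => ?_
          rw [mem_range] at ht
          rw [show 2 * (c + m + 1 + t) + 1 = p - (2 * (N - n - 1 + (n - m - 1 - t)) + 2) by omega]
          exact qbr_psub _ (by omega)
      _ = (-1 : ℂ) ^ (n - m)
            * ∏ t ∈ range (n - m), qbr A (2 * (N - n - 1 + (n - m - 1 - t)) + 2) := by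
          rw [show (∏ t ∈ range (n - m), -qbr A (2 * (N - n - 1 + (n - m - 1 - t)) + 2))
              = (∏ _t ∈ range (n - m), (-1 : ℂ))
                * ∏ t ∈ range (n - m), qbr A (2 * (N - n - 1 + (n - m - 1 - t)) + 2) from by
            rw [← prod_mul_distrib]; exact prod_congr rfl fun t _ => (neg_one_mul _).symm]
          rw [prod_const, card_range]
      _ = (-1 : ℂ) ^ (n - m) * ∏ t ∈ range (n - m), qbr A (2 * (N - n - 1 + t) + 2) := by
          rw [prod_range_reflect (fun t => qbr A (2 * (N - n - 1 + t) + 2)) (n - m)]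
  have hW : (∏ j ∈ Ico (2 * c + m + 1) (2 * c + n + 1), qbrP A (j + 1))
      = ∏ j ∈ Ico (2 * N - n - 1) (2 * N - m - 1), qbrP A (j + 1) := by
    simp only [prod_Ico_eq_prod_range]
    rw [show 2 * c + n + 1 - (2 * c + m + 1) = n - m by omega,
      show 2 * N - m - 1 - (2 * N - n - 1) = n - m by omega]
    calc ∏ t ∈ range (n - m), qbrP A (2 * c + m + 1 + t + 1)
        = ∏ t ∈ range (n - m), qbrP A (2 * N - n - 1 + (n - m - 1 - t) + 1) := by
          refine prod_congr rfl fun t ht => ?_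
          rw [mem_range] at ht
          rw [show 2 * c + m + 1 + t + 1 = p - (2 * N - n - 1 + (n - m - 1 - t) + 1) by omega]
          exact qbrP_psub _ (by omega)
      _ = ∏ t ∈ range (n - m), qbrP A (2 * N - n - 1 + t + 1) :=
          prod_range_reflect (fun t => qbrP A (2 * N - n - 1 + t + 1)) (n - m)
  -- nonvanishing
  have ha : qfact A m ≠ 0 := by
    unfold qfact
    exact prod_ne_zero_iff.mpr fun j hj =>
      qbr_ne (j + 1) (by omega) (by rw [mem_range] at hj; omega)
  have hb : qdfact A (2 * c + 2 * m + 1) ≠ 0 := by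
    rw [show 2 * c + 2 * m + 1 = 2 * (c + m) + 1 by ring, qdfact_odd]
    exact prod_ne_zero_iff.mpr fun j hj =>
      qbr_ne _ (by omega) (by rw [mem_range] at hj; omega)
  have he : qfactP A (2 * c + m + 1) ≠ 0 := by
    unfold qfactP
    exact prod_ne_zero_iff.mpr fun j _ => qbrP_ne _
  have hb2 : qdfact A (2 * N - 2 * n - 2) ≠ 0 := by
    rw [show 2 * N - 2 * n - 2 = 2 * (N - n - 1) by omega, qdfact_even]
    exact prod_ne_zero_iff.mpr fun j hj =>
      qbr_ne _ (by omega) (by rw [mem_range] at hj; omega)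
  have he2 : qfactP A (2 * N - n - 1) ≠ 0 := by
    unfold qfactP
    exact prod_ne_zero_iff.mpr fun j _ => qbrP_ne _
  have hU : (∏ j ∈ Ico m n, qbr A (j + 1)) ≠ 0 :=
    prod_ne_zero_iff.mpr fun j hj =>
      qbr_ne _ (by omega) (by rw [mem_Ico] at hj; omega)
  -- RHS: rational function as a single quotient of polynomials
  have div4 : ∀ u a b c d : RatFunc ℚ, u * (a / b) / (c / d) = u * (a * d) / (b * c) := by
    intros u a b c d
    simp only [div_eq_mul_inv, mul_inv, inv_inv]
    ring
  have div4C : ∀ u a b c d : ℂ, u * (a * d) / (b * c) = u * (a / b) / (c / d) := by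
    intros u a b c d
    simp only [div_eq_mul_inv, mul_inv, inv_inv]
    ring
  have hrhat : Rhat N n m
      = algebraMap (Polynomial ℚ) (RatFunc ℚ)
          ((-1) ^ (n - m) * (sN Polynomial.X m (2 * N - 2 * m - 2) (2 * N - m - 1)
            * sD Polynomial.X n (2 * N - 2 * n - 2) (2 * N - n - 1)))
        / algebraMap (Polynomial ℚ) (RatFunc ℚ)
          (sD Polynomial.X m (2 * N - 2 * m - 2) (2 * N - m - 1)
            * sN Polynomial.X n (2 * N - 2 * n - 2) (2 * N - n - 1)) := by
    unfold Rhat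
    rw [side_X, side_X]
    simp only [map_mul, map_pow, map_neg, map_one, map_sN, map_sD, RatFunc.algebraMap_X]
    rw [div4]
  have evalsN : ∀ a b c : ℕ,
      Polynomial.eval₂ (algebraMap ℚ ℂ) A (sN Polynomial.X a b c) = sN A a b c := by
    intro a b c
    have h : Polynomial.eval₂ (algebraMap ℚ ℂ) A (sN Polynomial.X a b c)
        = (Polynomial.eval₂RingHom (algebraMap ℚ ℂ) A) (sN Polynomial.X a b c) := rfl
    rw [h, map_sN]
    congr 1
    simp
  have evalsD : ∀ a b c : ℕ,
      Polynomial.eval₂ (algebraMap ℚ ℂ) A (sD Polynomial.X a b c) = sD A a b c := by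
    intro a b c
    have h : Polynomial.eval₂ (algebraMap ℚ ℂ) A (sD Polynomial.X a b c)
        = (Polynomial.eval₂RingHom (algebraMap ℚ ℂ) A) (sD Polynomial.X a b c) := rfl
    rw [h, map_sD]
    congr 1
    simp
  have hsNn : sN A n (2 * N - 2 * n - 2) (2 * N - n - 1) ≠ 0 := by
    unfold sN
    refine mul_ne_zero (mul_ne_zero ?_ ?_) ?_ <;>
      refine prod_ne_zero_iff.mpr fun j hj => ?_ <;> rw [mem_range] at hj
    · exact sub_ne_zero.2 (key1 _ (by omega) (by omega))
    · exact sub_ne_zero.2 (key1 _ (by omega) (by omega))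
    · exact key2 _
  have hsDm : sD A m (2 * N - 2 * m - 2) (2 * N - m - 1) ≠ 0 := by
    unfold sD
    refine mul_ne_zero (mul_ne_zero ?_ ?_) ?_ <;>
      exact prod_ne_zero_iff.mpr fun j hj => pow_ne_zero _ hBne
  have hden : Polynomial.eval₂ (algebraMap ℚ ℂ) A
      (sD Polynomial.X m (2 * N - 2 * m - 2) (2 * N - m - 1)
        * sN Polynomial.X n (2 * N - 2 * n - 2) (2 * N - n - 1)) ≠ 0 := by
    rw [Polynomial.eval₂_mul, evalsD, evalsN]
    exact mul_ne_zero hsDm hsNn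
  have heval : RatFunc.eval (algebraMap ℚ ℂ) A (Rhat N n m)
      = ((-1 : ℂ) ^ (n - m) * (sN A m (2 * N - 2 * m - 2) (2 * N - m - 1)
          * sD A n (2 * N - 2 * n - 2) (2 * N - n - 1)))
        / (sD A m (2 * N - 2 * m - 2) (2 * N - m - 1)
          * sN A n (2 * N - 2 * n - 2) (2 * N - n - 1)) := by
    rw [hrhat, eval_polydiv _ _ _ _ hden]
    simp only [Polynomial.eval₂_mul, Polynomial.eval₂_pow, Polynomial.eval₂_neg,
      Polynomial.eval₂_one, evalsN, evalsD]
  rw [heval, div4C, ← side_C A hA0, ← side_C A hA0]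
  rw [hOdd1, hP1, hUV, hEven1, hP2, hV, hW]
  field_simp
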